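/- Noncommutative Cayley–Hamilton theorem for 2×2 matrices: for A = [[a,b],[c,d]] over a noncommutative ring with b and c invertible, define tr₁(A) = a + b d b^{-1}, det₁(A) = b d b^{-1} a - b c, tr₂(A) = d + c a c^{-1}, det₂(A) = c a c^{-1} d - c b. Then A² - diag(tr₁(A), tr₂(A)) · A + diag(det₁(A), det₂(A)) = 0. -/
import Mathlib

/-- Noncommutative Cayley–Hamilton theorem for 2×2 matrices:
`A² - diag(tr₁ A, tr₂ A) A + diag(det₁ A, det₂ A) = 0` where
`tr₁ A = a + b d ⅟b`, `det₁ A = b d ⅟b a - b c`,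
`tr₂ A = d + c a ⅟c`, `det₂ A = c a ⅟c d - c b`. -/
theorem noncomm_cayley_hamilton_2x2 (R : Type*) [Ring R] (a b c d : R)
    [Invertible b] [Invertible c] :
    (!![a, b; c, d] : Matrix (Fin 2) (Fin 2) R) ^ 2
      - !![a + b * d * ⅟b, 0; 0, d + c * a * ⅟c] * !![a, b; c, d]
      + !![b * d * ⅟b * a - b * c, 0; 0, c * a * ⅟c * d - c * b] = 0 := by
  ext i j
  fin_cases i <;> fin_cases j <;>
    simp [pow_two, Matrix.mul_apply, Fin.sum_univ_succ, mul_assoc, mul_sub, sub_mul, add_mul, mul_add] <;>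
    abel
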